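/- Let G = (V, E) be a finite simple graph and let λ ∈ ℝ be an eigenvalue of the adjacency matrix of G, with multiplicity mult(λ) = dim_ℝ {x ∈ ℝ^V : Ax = λx}. Let W ⊆ V be an induced forest of G with no isolated vertices, with l leaves and c connected components. Then mult(λ) ≤ |V| − |W| + l − c. -/

import Mathlib

open SimpleGraph Finset Module

section Helpers

variable {V : Type*} [Fintype V] [DecidableEq V]

/-- A vertex with at most one neighbor is not an interior vertex of any path. -/
lemma leaf_not_mem_path_support {α : Type*} {H : SimpleGraph α} {w₀ : α}
    (hw : ∀ a b, H.Adj w₀ a → H.Adj w₀ b → a = b) :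
    ∀ {x y : α} (p : H.Walk x y), p.IsPath → x ≠ w₀ → y ≠ w₀ → w₀ ∉ p.support := by
  intro x y p
  induction p with
  | nil =>
    intro _ hx _
    simp only [SimpleGraph.Walk.support_nil, List.mem_singleton]
    exact fun h => hx h.symm
  | @cons a b y h q ih =>
    intro hp hx hy
    rw [SimpleGraph.Walk.support_cons, List.mem_cons]
    push_neg
    rw [SimpleGraph.Walk.cons_isPath_iff] at hp
    refine ⟨fun h' => hx h'.symm, ?_⟩
    by_cases hb : b = w₀
    · subst hb
      cases q with
      | nil => exact absurd rfl hy
      | @cons b z y h2 q2 =>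
        exfalso
        have hxz : a = z := hw a z h.symm h2
        apply hp.2
        rw [SimpleGraph.Walk.support_cons]
        exact List.mem_cons_of_mem _ (hxz ▸ q2.start_mem_support)
    · exact ih hp.1 hb hy

lemma induce_connected_of_walks (G : SimpleGraph V) {s : Set V} {u : V} (hu : u ∈ s)
    (h : ∀ v ∈ s, ∃ q : G.Walk u v, ∀ z ∈ q.support, z ∈ s) :
    (G.induce s).Connected := by
  apply G.induce_connected_of_patches u hu
  intro v hv
  obtain ⟨q, hq⟩ := h v hv
  exact ⟨{z | z ∈ q.support}, fun z hz => hq z hz, q.start_mem_support, q.end_mem_support,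
    (q.connected_induce_support).preconnected _ _⟩

lemma induce_acyclic_mono (G : SimpleGraph V) {s t : Set V} (h : s ⊆ t)
    (ht : (G.induce t).IsAcyclic) : (G.induce s).IsAcyclic := by
  intro v c hc
  exact ht (c.map (G.induceHomOfLE h).toHom)
    (hc.map (G.induceHomOfLE h).injective)

lemma induce_neighborSet_ncard (G : SimpleGraph V) (s : Set V) (v : V) (hv : v ∈ s) :
    ((G.induce s).neighborSet ⟨v, hv⟩).ncard = (G.neighborSet v ∩ s).ncard := by
  rw [← Set.ncard_image_of_injective _ (Subtype.val_injective
    (p := fun z => z ∈ s))]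
  congr 1
  ext z
  constructor
  · rintro ⟨⟨z', hz'⟩, hadj, rfl⟩
    exact ⟨hadj, hz'⟩
  · rintro ⟨hadj, hz⟩
    exact ⟨⟨z, hz⟩, hadj, rfl⟩

lemma exists_leaf {α : Type*} [Fintype α] (H : SimpleGraph α)
    (hc : H.Connected) (ha : H.IsAcyclic) (h2 : 2 ≤ Fintype.card α) (u : α) :
    ∃ w, w ≠ u ∧ (H.neighborSet w).ncard = 1 := by
  classical
  have hdegn : ∀ v : α, H.degree v = (H.neighborSet v).ncard := by
    intro v
    have : H.neighborSet v = ↑(H.neighborFinset v) := by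
      ext z; simp [SimpleGraph.mem_neighborFinset]
    have h' := Set.ncard_coe_finset (H.neighborFinset v); rw [← this] at h'; rw [h']
    rfl
  have hdeg1 : ∀ v : α, 1 ≤ H.degree v := by
    intro v
    rw [Nat.one_le_iff_ne_zero, Ne, ← Nat.le_zero, Nat.not_le, H.degree_pos_iff_exists_adj v]
    obtain ⟨v', hv'⟩ := Fintype.exists_ne_of_one_lt_card h2 v
    obtain ⟨p⟩ := hc.preconnected v v'
    cases p with
    | nil => exact absurd rfl hv'.symm
    | cons h q => exact ⟨_, h⟩
  have hedge := (SimpleGraph.IsTree.mk hc ha).card_edgeFinset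
  have hsum : ∑ v : α, H.degree v = 2 * (Fintype.card α - 1) := by
    rw [SimpleGraph.sum_degrees_eq_twice_card_edges]
    omega
  by_contra hcon
  push_neg at hcon
  have hdeg2 : ∀ v : α, v ≠ u → 2 ≤ H.degree v := by
    intro v hv
    have h1 := hdeg1 v
    have h2' := hcon v hv
    rw [← hdegn] at h2'
    omega
  have hbound : (Finset.univ.erase u).card • 2 ≤ ∑ v ∈ Finset.univ.erase u, H.degree v :=
    Finset.card_nsmul_le_sum (Finset.univ.erase u) _ 2
      (fun v hv => hdeg2 v (Finset.ne_of_mem_erase hv))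
  have hsplit : H.degree u + ∑ v ∈ Finset.univ.erase u, H.degree v = ∑ v : α, H.degree v :=
    Finset.add_sum_erase _ (fun v => H.degree v) (Finset.mem_univ u)
  have hcard : (Finset.univ.erase u).card = Fintype.card α - 1 := by
    rw [Finset.card_erase_of_mem (Finset.mem_univ u), Finset.card_univ]
  have h1u := hdeg1 u
  rw [hcard] at hbound
  simp only [smul_eq_mul] at hbound
  omega

lemma filter_adj_card_eq (G : SimpleGraph V) [DecidableRel G.Adj] (T : Finset V) (v : V) :
    ((T.filter (fun z => G.Adj v z)).card : ℕ) = (G.neighborSet v ∩ (T : Set V)).ncard := by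
  rw [← Set.ncard_coe_finset]
  congr 1
  ext z
  simp only [Finset.coe_filter, Set.mem_setOf_eq, Set.mem_inter_iff, SimpleGraph.mem_neighborSet,
    Finset.mem_coe]
  exact and_comm

lemma vanish (G : SimpleGraph V) [DecidableRel G.Adj] (μ : ℝ) (x : V → ℝ) :
    ∀ (n : ℕ) (T : Finset V), T.card ≤ n →
      (G.induce (T : Set V)).Connected → (G.induce (T : Set V)).IsAcyclic → 2 ≤ T.card →
      (∀ v ∈ T, μ * x v = ∑ z ∈ T.filter (fun z => G.Adj v z), x z) →
      ∀ u ∈ T, (∀ v ∈ T, v ≠ u → (T.filter (fun z => G.Adj v z)).card = 1 → x v = 0) →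
      ∀ v ∈ T, x v = 0 := by
  intro n
  induction n with
  | zero => intro T hT0 _ _ h2 _ _ _ _ _ _; omega
  | succ n ih =>
    intro T hTn hconn hacyc h2 heq u hu hleaf
    have hcardcoe : Fintype.card ↥(T : Set V) = T.card := by
      simp
    -- find a leaf w ≠ u
    obtain ⟨w', hwne, hw1⟩ := exists_leaf (G.induce (T : Set V)) hconn hacyc
      (by rwa [hcardcoe]) ⟨u, hu⟩
    set w : V := (w' : V) with hwdef
    have hwT : w ∈ T := w'.2
    have hwneu : w ≠ u := by
      intro h
      exact hwne (Subtype.ext h)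
    have hwfil : (T.filter (fun z => G.Adj w z)).card = 1 := by
      rw [filter_adj_card_eq, ← induce_neighborSet_ncard G (T : Set V) w w'.2]
      exact hw1
    obtain ⟨p, hp⟩ := Finset.card_eq_one.mp hwfil
    have hpT : p ∈ T ∧ G.Adj w p := by
      have := Finset.mem_filter.mp (hp ▸ Finset.mem_singleton_self p)
      exact this
    have hwp : w ≠ p := G.ne_of_adj hpT.2
    have hxw : x w = 0 := hleaf w hwT hwneu hwfil
    have hxp : x p = 0 := by
      have := heq w hwT
      rw [hp, Finset.sum_singleton, hxw, mul_zero] at this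
      exact this.symm
    rcases eq_or_lt_of_le h2 with hc2 | hc3
    · -- T = {w, p}
      have hsub : ({w, p} : Finset V) ⊆ T := by
        intro z hz
        rcases Finset.mem_insert.mp hz with rfl | hz
        · exact hwT
        · exact (Finset.mem_singleton.mp hz) ▸ hpT.1
      have hTeq : ({w, p} : Finset V) = T := by
        apply Finset.eq_of_subset_of_card_le hsub
        rw [Finset.card_insert_of_notMem (by simpa using hwp), Finset.card_singleton]
        omega
      intro v hv
      rw [← hTeq] at hv
      rcases Finset.mem_insert.mp hv with rfl | hv
      · exact hxw
      · exact (Finset.mem_singleton.mp hv) ▸ hxp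
    · -- remove the leaf w and recurse
      set T' : Finset V := T.erase w with hT'def
      have hT'sub : T' ⊆ T := Finset.erase_subset _ _
      have hT'card : T'.card = T.card - 1 := Finset.card_erase_of_mem hwT
      have huT' : u ∈ T' := Finset.mem_erase.mpr ⟨Ne.symm hwneu, hu⟩
      -- unique neighbor property of w' in the induced graph
      have huniq : ∀ a b : ↥(T : Set V), (G.induce (T : Set V)).Adj w' a →
          (G.induce (T : Set V)).Adj w' b → a = b := by
        intro a b h1 h2'
        have ha : (a : V) ∈ T.filter (fun z => G.Adj w z) :=
          Finset.mem_filter.mpr ⟨a.2, h1⟩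
        have hb : (b : V) ∈ T.filter (fun z => G.Adj w z) :=
          Finset.mem_filter.mpr ⟨b.2, h2'⟩
        rw [hp, Finset.mem_singleton] at ha hb
        exact Subtype.ext (ha.trans hb.symm)
      have hconn' : (G.induce (T' : Set V)).Connected := by
        apply induce_connected_of_walks G (u := u) (by exact_mod_cast huT')
        intro v hv
        have hvT' : v ∈ T' := by exact_mod_cast hv
        have hvT : v ∈ T := hT'sub hvT'
        have hvw : v ≠ w := (Finset.mem_erase.mp hvT').1
        obtain ⟨r⟩ := hconn.preconnected ⟨u, hu⟩ ⟨v, hvT⟩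
        set q0 : (G.induce (T : Set V)).Walk ⟨u, hu⟩ ⟨v, hvT⟩ := r.toPath.1 with hq0
        have hwnot : w' ∉ q0.support := by
          apply leaf_not_mem_path_support (fun a b h1 h2' => huniq a b h1 h2')
            _ r.toPath.2
          · intro h; exact hwneu (congrArg Subtype.val h).symm
          · intro h; exact hvw (congrArg Subtype.val h)
        set q : G.Walk u v :=
          (q0.map (SimpleGraph.Embedding.induce (T : Set V)).toHom).copy rfl rfl with hq
        refine ⟨q, ?_⟩
        intro z hz
        change z ∈ (q0.map (SimpleGraph.Embedding.induce (T : Set V)).toHom).support at hz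
        rw [SimpleGraph.Walk.support_map, List.mem_map] at hz
        obtain ⟨z', hz', rfl⟩ := hz
        have hz'w : (z' : V) ≠ w := by
          intro h
          exact hwnot ((Subtype.ext h : z' = w') ▸ hz')
        exact_mod_cast Finset.mem_erase.mpr ⟨hz'w, z'.2⟩
      have hacyc' : (G.induce (T' : Set V)).IsAcyclic :=
        induce_acyclic_mono G (by exact_mod_cast hT'sub) hacyc
      have heq' : ∀ v ∈ T', μ * x v = ∑ z ∈ T'.filter (fun z => G.Adj v z), x z := by
        intro v hv
        rw [heq v (hT'sub hv)]
        apply (Finset.sum_subset (Finset.filter_subset_filter _ hT'sub) _).symm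
        intro z hz hz'
        have hzT := Finset.mem_filter.mp hz
        have : z = w := by
          by_contra hne
          exact hz' (Finset.mem_filter.mpr ⟨Finset.mem_erase.mpr ⟨hne, hzT.1⟩, hzT.2⟩)
        rw [this]
        exact hxw
      have hleaf' : ∀ v ∈ T', v ≠ u → ((T'.filter (fun z => G.Adj v z)).card = 1) → x v = 0 := by
        intro v hv hvu hcard1
        by_cases hadj : G.Adj v w
        · have : v ∈ T.filter (fun z => G.Adj w z) :=
            Finset.mem_filter.mpr ⟨hT'sub hv, hadj.symm⟩
          rw [hp, Finset.mem_singleton] at this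
          exact this ▸ hxp
        · have hfe : T'.filter (fun z => G.Adj v z) = T.filter (fun z => G.Adj v z) := by
            rw [hT'def, Finset.filter_erase, Finset.erase_eq_of_notMem]
            simp [hadj]
          rw [hfe] at hcard1
          exact hleaf v (hT'sub hv) hvu hcard1
      intro v hv
      by_cases hvw : v = w
      · exact hvw ▸ hxw
      · exact ih T' (by omega) hconn' hacyc' (by omega) heq' u huT' hleaf' v
          (Finset.mem_erase.mpr ⟨hvw, hv⟩)

end Helpers

/-- Forest Bound for the adjacency spectrum: if `W` is an induced forest of `G`
without isolated vertices, with `l` leaves and `c` connected components, then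
every adjacency eigenvalue `μ` of `G` has multiplicity at most
`|V| - |W| + l - c`. -/
theorem adjacency_mult_forest_bound {V : Type*} [Fintype V] [DecidableEq V]
    (G : SimpleGraph V) [DecidableRel G.Adj] (μ : ℝ)
    (hμ : Module.End.HasEigenvalue (Matrix.toLin' (G.adjMatrix ℝ)) μ)
    (W : Set V)
    (hforest : (G.induce W).IsAcyclic)
    (hniso : ∀ v ∈ W, (G.neighborSet v ∩ W).Nonempty)
    (l c : ℕ)
    (hl : l = {v | v ∈ W ∧ (G.neighborSet v ∩ W).ncard = 1}.ncard)
    (hc : c = Nat.card (G.induce W).ConnectedComponent) :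
    (Module.finrank ℝ
        (Module.End.eigenspace (Matrix.toLin' (G.adjMatrix ℝ)) μ) : ℤ)
      ≤ (Fintype.card V : ℤ) - W.ncard + l - c := by
  classical
  set H : SimpleGraph ↥W := G.induce W with hH
  -- basic facts about (the vertex sets of) connected components of the induced forest
  have hsuppW : ∀ (K : H.ConnectedComponent), (Subtype.val '' K.supp : Set V) ⊆ W := by
    rintro K _ ⟨z, _, rfl⟩; exact z.2
  have hclosure : ∀ (K : H.ConnectedComponent) (v : V), v ∈ (Subtype.val '' K.supp : Set V) →
      ∀ z ∈ W, G.Adj v z → z ∈ (Subtype.val '' K.supp : Set V) := by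
    rintro K _ ⟨b, hb, rfl⟩ z hzW hadj
    refine ⟨⟨z, hzW⟩, ?_, rfl⟩
    rw [SimpleGraph.ConnectedComponent.mem_supp_iff] at hb ⊢
    rw [← hb]
    apply SimpleGraph.ConnectedComponent.sound
    have hadj' : H.Adj ⟨z, hzW⟩ b := hadj.symm
    exact hadj'.reachable
  have hmemTK : ∀ (v : V) (hv : v ∈ W),
      v ∈ (Subtype.val '' (H.connectedComponentMk ⟨v, hv⟩).supp : Set V) :=
    fun v hv => ⟨⟨v, hv⟩, (SimpleGraph.ConnectedComponent.mem_supp_iff _ _).mpr rfl, rfl⟩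
  have hconnK : ∀ (K : H.ConnectedComponent),
      (G.induce (Subtype.val '' K.supp : Set V)).Connected := by
    intro K
    obtain ⟨a, ha⟩ := K.exists_rep
    have ha' : H.connectedComponentMk a = K := ha
    have haT : (a : V) ∈ (Subtype.val '' K.supp : Set V) :=
      ⟨a, (SimpleGraph.ConnectedComponent.mem_supp_iff _ _).mpr ha', rfl⟩
    apply induce_connected_of_walks G (u := (a : V)) haT
    rintro _ ⟨b, hb, rfl⟩
    have hb' : H.connectedComponentMk b = K :=
      (SimpleGraph.ConnectedComponent.mem_supp_iff _ _).mp hb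
    obtain ⟨r⟩ := SimpleGraph.ConnectedComponent.exact (ha'.trans hb'.symm)
    refine ⟨(r.map (SimpleGraph.Embedding.induce W).toHom).copy rfl rfl, ?_⟩
    intro z hz
    change z ∈ (r.map (SimpleGraph.Embedding.induce W).toHom).support at hz
    rw [SimpleGraph.Walk.support_map, List.mem_map] at hz
    obtain ⟨z', hz', rfl⟩ := hz
    refine ⟨z', ?_, rfl⟩
    rw [SimpleGraph.ConnectedComponent.mem_supp_iff]
    have hr : H.Reachable a z' := ⟨r.takeUntil z' hz'⟩
    exact (SimpleGraph.ConnectedComponent.sound hr).symm.trans ha'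
  have hacycK : ∀ (K : H.ConnectedComponent),
      (G.induce (Subtype.val '' K.supp : Set V)).IsAcyclic :=
    fun K => induce_acyclic_mono G (hsuppW K) hforest
  have hTK2 : ∀ (K : H.ConnectedComponent),
      2 ≤ (Subtype.val '' K.supp : Set V).toFinset.card := by
    intro K
    obtain ⟨a, ha⟩ := K.exists_rep
    have ha' : H.connectedComponentMk a = K := ha
    have haT : (a : V) ∈ (Subtype.val '' K.supp : Set V) :=
      ⟨a, (SimpleGraph.ConnectedComponent.mem_supp_iff _ _).mpr ha', rfl⟩
    obtain ⟨z, hz⟩ := hniso (a : V) a.2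
    have hzT : z ∈ (Subtype.val '' K.supp : Set V) := hclosure K _ haT z hz.2 hz.1
    exact Finset.one_lt_card.mpr ⟨(a : V), Set.mem_toFinset.mpr haT, z, Set.mem_toFinset.mpr hzT,
      G.ne_of_adj hz.1⟩
  -- neighborhoods within a component agree with neighborhoods within W
  have hnbr : ∀ (K : H.ConnectedComponent) (v : V), v ∈ (Subtype.val '' K.supp : Set V) →
      G.neighborSet v ∩ (Subtype.val '' K.supp : Set V) = G.neighborSet v ∩ W := by
    intro K v hv
    ext z
    simp only [Set.mem_inter_iff, SimpleGraph.mem_neighborSet]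
    exact ⟨fun ⟨h1, h2⟩ => ⟨h1, hsuppW K h2⟩, fun ⟨h1, h2⟩ => ⟨h1, hclosure K v hv z h2 h1⟩⟩
  have hfilcard : ∀ (K : H.ConnectedComponent) (v : V), v ∈ (Subtype.val '' K.supp : Set V) →
      (((Subtype.val '' K.supp : Set V).toFinset.filter (fun z => G.Adj v z)).card
        = (G.neighborSet v ∩ W).ncard) := by
    intro K v hv
    rw [filter_adj_card_eq, Set.coe_toFinset, hnbr K v hv]
  -- choose a leaf in every component
  have hex : ∀ K : H.ConnectedComponent, ∃ w : V, w ∈ W ∧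
      (∀ hw : w ∈ W, H.connectedComponentMk ⟨w, hw⟩ = K) ∧
      (G.neighborSet w ∩ W).ncard = 1 := by
    intro K
    obtain ⟨a, ha⟩ := K.exists_rep
    have ha' : H.connectedComponentMk a = K := ha
    have haT : (a : V) ∈ (Subtype.val '' K.supp : Set V) :=
      ⟨a, (SimpleGraph.ConnectedComponent.mem_supp_iff _ _).mpr ha', rfl⟩
    obtain ⟨w', hwne, hw1⟩ := exists_leaf (G.induce (Subtype.val '' K.supp : Set V))
      (hconnK K) (hacycK K)
      (by rw [← Set.toFinset_card]; exact hTK2 K) ⟨(a : V), haT⟩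
    have hwT : (w' : V) ∈ (Subtype.val '' K.supp : Set V) := w'.2
    have hwW : (w' : V) ∈ W := hsuppW K hwT
    refine ⟨(w' : V), hwW, ?_, ?_⟩
    · intro hw
      obtain ⟨b, hb, hbeq⟩ := hwT
      have : (⟨(w' : V), hw⟩ : ↥W) = b := Subtype.ext hbeq.symm
      rw [this]
      exact (SimpleGraph.ConnectedComponent.mem_supp_iff _ _).mp hb
    · have := induce_neighborSet_ncard G (Subtype.val '' K.supp : Set V) (w' : V) hwT
      rw [hnbr K _ hwT] at this
      rw [← this]
      exact hw1
  choose R hRW hRK hRL using hex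
  set Lset : Set V := {v | v ∈ W ∧ (G.neighborSet v ∩ W).ncard = 1} with hLset
  have hRrange : Set.range R ⊆ Lset := by
    rintro _ ⟨K, rfl⟩; exact ⟨hRW K, hRL K⟩
  have hRinj : Function.Injective R := by
    intro K1 K2 h
    have h1 := hRK K1 (hRW K1)
    have h2 := hRK K2 (hRW K2)
    rw [← h1, ← h2]
    exact congrArg H.connectedComponentMk (Subtype.ext h)
  set S : Set V := Wᶜ ∪ (Lset \ Set.range R) with hS
  -- the key vanishing statement
  have hvanishS : ∀ x : V → ℝ, Matrix.mulVec (G.adjMatrix ℝ) x = μ • x → (∀ z ∈ S, x z = 0) →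
      ∀ v, x v = 0 := by
    intro x hx hSz v
    by_cases hvW : v ∈ W
    swap
    · exact hSz v (Or.inl hvW)
    set K := H.connectedComponentMk ⟨v, hvW⟩ with hK
    set TK : Set V := Subtype.val '' K.supp with hTK
    set T : Finset V := TK.toFinset with hT
    have hTcoe : (T : Set V) = TK := Set.coe_toFinset _
    have hvTK : v ∈ TK := hmemTK v hvW
    have hcomp : ∀ t ∈ TK, ∀ ht : t ∈ W, H.connectedComponentMk ⟨t, ht⟩ = K := by
      rintro _ ⟨b, hb, rfl⟩ ht
      have : (⟨(b : V), ht⟩ : ↥W) = b := Subtype.ext rfl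
      rw [this]
      exact (SimpleGraph.ConnectedComponent.mem_supp_iff _ _).mp hb
    have hRKT : R K ∈ T := by
      rw [hT, Set.mem_toFinset, hTK]
      exact ⟨⟨R K, hRW K⟩, (SimpleGraph.ConnectedComponent.mem_supp_iff _ _).mpr
        (hRK K (hRW K)), rfl⟩
    have heq : ∀ t ∈ T, μ * x t = ∑ z ∈ T.filter (fun z => G.Adj t z), x z := by
      intro t ht
      have htTK : t ∈ TK := Set.mem_toFinset.mp ht
      have h1 := congrFun hx t
      rw [SimpleGraph.adjMatrix_mulVec_apply] at h1
      rw [Pi.smul_apply, smul_eq_mul] at h1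
      rw [← h1]
      refine (Finset.sum_subset ?_ ?_).symm
      · intro z hz
        exact (G.mem_neighborFinset _ _).mpr (Finset.mem_filter.mp hz).2
      · intro z hz hz'
        have hadj : G.Adj t z := (G.mem_neighborFinset _ _).mp hz
        by_cases hzW : z ∈ W
        · exfalso
          apply hz'
          refine Finset.mem_filter.mpr ⟨?_, hadj⟩
          rw [hT, Set.mem_toFinset]
          exact hclosure K t htTK z hzW hadj
        · exact hSz z (Or.inl hzW)
    have hleaf : ∀ t ∈ T, t ≠ R K → (T.filter (fun z => G.Adj t z)).card = 1 → x t = 0 := by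
      intro t ht htR hcard1
      have htTK : t ∈ TK := Set.mem_toFinset.mp ht
      have htW : t ∈ W := hsuppW K htTK
      rw [hfilcard K t htTK] at hcard1
      apply hSz
      refine Or.inr ⟨⟨htW, hcard1⟩, ?_⟩
      rintro ⟨K', rfl⟩
      have : K' = K := by
        rw [← hRK K' (hRW K'), ← hcomp _ htTK (hRW K')]
      exact htR (congrArg R this)
    exact vanish G μ x T.card T le_rfl (hTcoe ▸ hconnK K) (hTcoe ▸ hacycK K)
      (hTK2 K) heq (R K) hRKT hleaf v (Set.mem_toFinset.mpr hvTK)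
  -- linear algebra: restriction to S is injective on the eigenspace
  set E := Module.End.eigenspace (Matrix.toLin' (G.adjMatrix ℝ)) μ with hE
  set φ : E →ₗ[ℝ] (↥S.toFinset → ℝ) :=
    { toFun := fun x s => (x : V → ℝ) s.1
      map_add' := fun _ _ => rfl
      map_smul' := fun _ _ => rfl } with hφ
  have hφinj : Function.Injective φ := by
    rw [← LinearMap.ker_eq_bot, LinearMap.ker_eq_bot']
    intro m hm
    have hmul : Matrix.mulVec (G.adjMatrix ℝ) (m : V → ℝ) = μ • (m : V → ℝ) := by
      have := Module.End.mem_eigenspace_iff.mp m.2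
      rwa [Matrix.toLin'_apply] at this
    have hz : ∀ z ∈ S, (m : V → ℝ) z = 0 := by
      intro z hzS
      exact congrFun hm ⟨z, Set.mem_toFinset.mpr hzS⟩
    have := hvanishS (m : V → ℝ) hmul hz
    ext v
    exact this v
  have hrank : Module.finrank ℝ E ≤ S.ncard := by
    have h1 := LinearMap.finrank_le_finrank_of_injective hφinj
    rw [Module.finrank_fintype_fun_eq_card, Fintype.card_coe] at h1
    rw [Set.ncard_eq_toFinset_card']
    exact h1
  -- counting
  have hLW : Lset ⊆ W := fun z hz => hz.1
  have hncardR : (Set.range R).ncard = c := by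
    rw [← Nat.card_coe_set_eq, Nat.card_range_of_injective hRinj, hc]
  have hdisj : Disjoint (Wᶜ : Set V) (Lset \ Set.range R) := by
    rw [Set.disjoint_left]
    intro z hz hz2
    exact hz (hLW hz2.1)
  have hSncard : S.ncard = (Wᶜ : Set V).ncard + (Lset \ Set.range R).ncard :=
    Set.ncard_union_eq hdisj (Set.toFinite _) (Set.toFinite _)
  have hcompl : W.ncard + (Wᶜ : Set V).ncard = Fintype.card V := by
    rw [← Nat.card_eq_fintype_card]
    exact Set.ncard_add_ncard_compl W
  have hdiff : (Lset \ Set.range R).ncard = Lset.ncard - (Set.range R).ncard :=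
    Set.ncard_diff hRrange (Set.toFinite _)
  have hcl : (Set.range R).ncard ≤ Lset.ncard :=
    Set.ncard_le_ncard hRrange (Set.toFinite _)
  have hlL : Lset.ncard = l := hl.symm
  rw [hSncard, hdiff, hncardR, hlL] at hrank
  omega
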